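/- Let G be a finite group, z ∈ Z(G), and a ∈ G such that the conjugacy class of az equals the conjugacy class of a. Then the order of z divides the size of the conjugacy class of a. -/

import Mathlib

theorem orderOf_central_dvd_class_card (G : Type*) [Group G] [Finite G]
    (z : G) (hz : z ∈ Subgroup.center G) (a : G)
    (h : {b : G | IsConj (a * z) b} = {b : G | IsConj a b}) :
    orderOf z ∣ Nat.card {b : G | IsConj a b} := by
  set S : Set G := {b : G | IsConj a b} with hS
  have hcomm : ∀ g : G, z * g = g * z := fun g =>
    (Subgroup.mem_center_iff.mp hz g).symm
  have key : ∀ g : G, g * (a * z) * g⁻¹ = g * a * g⁻¹ * z := by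
    intro g
    rw [← mul_assoc g a z, mul_assoc (g * a) z g⁻¹, hcomm g⁻¹, ← mul_assoc]
  -- closure under right multiplication by z
  have hclos : ∀ b ∈ S, b * z ∈ S := by
    intro b hb
    obtain ⟨g, hg⟩ := isConj_iff.mp hb
    have h1 : b * z ∈ {b : G | IsConj (a * z) b} :=
      isConj_iff.mpr ⟨g, by rw [key, hg]⟩
    rwa [h] at h1
  -- closure under right multiplication by z⁻¹
  have hclos' : ∀ b ∈ S, b * z⁻¹ ∈ S := by
    intro b hb
    have hb' : b ∈ {b : G | IsConj (a * z) b} := by rw [h]; exact hb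
    obtain ⟨g, hg⟩ := isConj_iff.mp hb'
    refine isConj_iff.mpr ⟨g, ?_⟩
    rw [eq_mul_inv_iff_mul_eq, ← key, hg]
  -- closure under all integer powers of z
  have hclosH : ∀ b ∈ S, ∀ k : ℤ, b * z ^ k ∈ S := by
    intro b hb k
    induction k using Int.induction_on with
    | zero => simpa using hb
    | succ n ih =>
        have := hclos _ ih
        rwa [mul_assoc, ← zpow_add_one] at this
    | pred n ih =>
        have := hclos' _ ih
        rwa [mul_assoc, ← zpow_sub_one] at this
  set H := Subgroup.zpowers z with hH
  set π : G → G ⧸ H := QuotientGroup.mk with hπ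
  have hSeq : S = π ⁻¹' (π '' S) := by
    ext b
    constructor
    · intro hb; exact ⟨b, hb, rfl⟩
    · rintro ⟨c, hc, hcb⟩
      have hmem : c⁻¹ * b ∈ H := QuotientGroup.eq.mp hcb
      obtain ⟨k, hk⟩ := Subgroup.mem_zpowers_iff.mp hmem
      have := hclosH c hc k
      rwa [hk, mul_inv_cancel_left] at this
  have e1 : Nat.card S = Nat.card (π ⁻¹' (π '' S) : Set G) := by rw [← hSeq]
  have e2 : Nat.card (π ⁻¹' (π '' S) : Set G) = Nat.card H * Nat.card (π '' S) := by
    rw [Nat.card_congr (QuotientGroup.preimageMkEquivSubgroupProdSet H (π '' S)),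
      Nat.card_prod]
  have hcard : Nat.card S = Nat.card H * Nat.card (π '' S) := e1.trans e2
  rw [hS] at hcard
  rw [hcard, ← Nat.card_zpowers z]
  exact Dvd.intro _ rfl
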